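/- arXiv:1708.06182 — 2 statements merged into one kernel-verified Lean document; each statement's English description precedes it below -/
import Mathlib

section
/- Let w be analytic on the open unit disk, and let z₁ on the unit circle be a point such that lim_{z→z₁} w(z) exists and is finite (from within the disk). Then the angular primitive w^{−1•}(z) = −i·∫₀^z (w(z') − w(0))/z' dz' also has a finite limit as z → z₁ from within the open unit disk. (Soft singularities are preserved by angular integration.) -/
open Metric Complex

/-- Soft singularities are preserved by angular integration: if `w`, analytic on
the open unit disk, has a finite limit at a boundary point `z₁` from within the
disk, then its angular primitive `W` (characterized by `W 0 = 0` and
`W'(z) = -i·(w z - w 0)/z`, the integrand extended by continuity at `0`) also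
has a finite limit at `z₁` from within the disk. -/
theorem angular_primitive_soft_singularity (w : ℂ → ℂ)
    (hw : DifferentiableOn ℂ w (ball (0 : ℂ) 1))
    (z₁ : ℂ) (hz₁ : ‖z₁‖ = 1) (L : ℂ)
    (hlim : Filter.Tendsto w (nhdsWithin z₁ (ball (0 : ℂ) 1)) (nhds L))
    (W : ℂ → ℂ) (hW0 : W 0 = 0)
    (hW : ∀ z ∈ ball (0 : ℂ) 1,
      HasDerivAt W (-I * (if z = 0 then deriv w 0 else (w z - w 0) / z)) z) :
    ∃ L' : ℂ, Filter.Tendsto W (nhdsWithin z₁ (ball (0 : ℂ) 1)) (nhds L') := by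
  set F := nhdsWithin z₁ (ball (0 : ℂ) 1) with hF
  -- z₁ is in the closure of the ball, so F is nontrivial
  have hz₁cl : z₁ ∈ closure (ball (0 : ℂ) 1) := by
    rw [closure_ball (0 : ℂ) one_ne_zero, mem_closedBall, dist_zero_right]
    simpa using hz₁.le
  haveI hne : F.NeBot := mem_closure_iff_nhdsWithin_neBot.mp hz₁cl
  -- bound on w near z₁
  have h1 : ∀ᶠ z in F, dist (w z) L < 1 := hlim (Metric.ball_mem_nhds L one_pos)
  obtain ⟨δ, hδpos, hδ⟩ := Metric.mem_nhdsWithin_iff.mp h1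
  set M : ℝ := 2 * (‖L‖ + 1 + ‖w 0‖) with hM
  have hMpos : 0 < M := by positivity
  set δ₀ : ℝ := min δ (1/2) with hδ₀
  have hδ₀pos : 0 < δ₀ := lt_min hδpos (by norm_num)
  -- derivative bound on ball z₁ δ' ∩ ball 0 1 for δ' ≤ δ₀
  have hbound : ∀ z ∈ ball z₁ δ₀ ∩ ball (0 : ℂ) 1,
      ‖-I * (if z = 0 then deriv w 0 else (w z - w 0) / z)‖ ≤ M := by
    rintro z ⟨hz1, hz2⟩
    have hzδ : dist z z₁ < δ := lt_of_lt_of_le (mem_ball.mp hz1) (min_le_left _ _)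
    have habs : (1:ℝ)/2 ≤ ‖z‖ := by
      have h2 : dist z z₁ < 1/2 := lt_of_lt_of_le (mem_ball.mp hz1) (min_le_right _ _)
      have h3 : ‖z₁‖ - ‖z‖ ≤ ‖z₁ - z‖ := norm_sub_norm_le _ _
      have h4 : ‖z₁ - z‖ < 1/2 := by rw [← dist_eq_norm, dist_comm]; exact h2
      have h5 : ‖z₁‖ = (1:ℝ) := hz₁
      have h6 : ‖z‖ = ‖z‖ := rfl
      rw [h6]; linarith
    have hz0 : z ≠ 0 := by
      intro h; rw [h] at habs; simp at habs; linarith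
    rw [if_neg hz0]
    have hwz : ‖w z - w 0‖ ≤ ‖L‖ + 1 + ‖w 0‖ := by
      have hd := hδ ⟨mem_ball.mpr hzδ, hz2⟩
      simp only [Set.mem_setOf_eq] at hd
      have h3 : ‖w z - L‖ < 1 := by rwa [dist_eq_norm] at hd
      calc ‖w z - w 0‖ ≤ ‖w z - L‖ + ‖L‖ + ‖w 0‖ := by
            have := norm_sub_le (w z - L + L) (w 0)
            simp only [sub_add_cancel] at this
            calc ‖w z - w 0‖ ≤ ‖w z - L‖ + ‖L - w 0‖ := by
                  have := norm_sub_le_norm_sub_add_norm_sub (w z) L (w 0); linarith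
              _ ≤ ‖w z - L‖ + (‖L‖ + ‖w 0‖) := by
                  have := norm_sub_le L (w 0); linarith
              _ = ‖w z - L‖ + ‖L‖ + ‖w 0‖ := by ring
        _ ≤ ‖L‖ + 1 + ‖w 0‖ := by linarith
    rw [norm_mul, norm_div]
    simp only [norm_neg, Complex.norm_I, one_mul]
    rw [hM]
    have hzn : ‖z‖ = ‖z‖ := rfl
    rw [hzn]
    rw [div_le_iff₀ (by linarith : (0:ℝ) < ‖z‖)]
    calc ‖w z - w 0‖ ≤ ‖L‖ + 1 + ‖w 0‖ := hwz
      _ = 2 * (‖L‖ + 1 + ‖w 0‖) * (1/2) := by ring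
      _ ≤ 2 * (‖L‖ + 1 + ‖w 0‖) * ‖z‖ := by
          apply mul_le_mul_of_nonneg_left habs (by positivity)
  -- Cauchy criterion
  have hc : Cauchy (Filter.map W F) := by
    rw [Metric.cauchy_iff]
    refine ⟨Filter.map_neBot, fun ε hε => ?_⟩
    set δ' : ℝ := min δ₀ (ε / (4 * M)) with hδ'
    have hδ'pos : 0 < δ' := lt_min hδ₀pos (by positivity)
    set s : Set ℂ := ball z₁ δ' ∩ ball (0 : ℂ) 1 with hs
    have hsF : s ∈ F := by
      rw [hF, mem_nhdsWithin_iff]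
      exact ⟨δ', hδ'pos, subset_rfl⟩
    refine ⟨W '' s, Filter.image_mem_map hsF, ?_⟩
    rintro _ ⟨x, hx, rfl⟩ _ ⟨y, hy, rfl⟩
    have hconv : Convex ℝ s := (convex_ball _ _).inter (convex_ball _ _)
    have hsub : s ⊆ ball z₁ δ₀ ∩ ball (0 : ℂ) 1 :=
      Set.inter_subset_inter_left _ (ball_subset_ball (min_le_left _ _))
    have hderiv : ∀ z ∈ s,
        HasDerivWithinAt W (-I * (if z = 0 then deriv w 0 else (w z - w 0) / z)) s z :=
      fun z hz => (hW z hz.2).hasDerivWithinAt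
    have key := hconv.norm_image_sub_le_of_norm_hasDerivWithin_le hderiv
      (fun z hz => hbound z (hsub hz)) hy hx
    rw [dist_eq_norm]
    calc ‖W x - W y‖ ≤ M * ‖x - y‖ := key
      _ ≤ M * (2 * δ') := by
          apply mul_le_mul_of_nonneg_left _ hMpos.le
          have hdx : dist x z₁ < δ' := mem_ball.mp hx.1
          have hdy : dist y z₁ < δ' := mem_ball.mp hy.1
          have := dist_triangle x z₁ y
          rw [← dist_eq_norm]
          rw [dist_comm z₁ y] at this
          linarith
      _ ≤ M * (2 * (ε / (4 * M))) := by
          apply mul_le_mul_of_nonneg_left _ hMpos.le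
          have : δ' ≤ ε / (4 * M) := min_le_right _ _
          linarith
      _ = ε / 2 := by field_simp; ring
      _ < ε := by linarith
  obtain ⟨L', hL'⟩ := CompleteSpace.complete hc
  exact ⟨L', hL'⟩
end

section
/- Let w be analytic on the open unit disk, and let z₁ on the unit circle be such that w has no finite limit at z₁ from within the disk (a 'hard singularity'). Then the angular derivative w•(z) = i·z·w'(z) also has no finite limit at z₁ from within the disk. -/
open Metric Complex

/-- Hard singularities are preserved by angular differentiation: if `w`, analytic
on the open unit disk, has no finite limit at a boundary point `z₁` from within
the disk, then neither does its angular derivative `i·z·w'(z)`. -/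
theorem angular_derivative_hard_singularity (w : ℂ → ℂ)
    (hw : DifferentiableOn ℂ w (ball (0 : ℂ) 1))
    (z₁ : ℂ) (hz₁ : ‖z₁‖ = 1)
    (hhard : ¬ ∃ L : ℂ, Filter.Tendsto w (nhdsWithin z₁ (ball (0 : ℂ) 1)) (nhds L)) :
    ¬ ∃ L : ℂ, Filter.Tendsto (fun z => I * z * deriv w z)
        (nhdsWithin z₁ (ball (0 : ℂ) 1)) (nhds L) := by
  rintro ⟨L, hL⟩
  apply hhard
  have hz₁0 : z₁ ≠ 0 := by
    intro h; rw [h] at hz₁; simp at hz₁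
  have hIz₁ : I * z₁ ≠ 0 := mul_ne_zero I_ne_zero hz₁0
  set l := nhdsWithin z₁ (ball (0 : ℂ) 1) with hl
  have hmem : z₁ ∈ closure (ball (0 : ℂ) 1) := by
    rw [closure_ball (0 : ℂ) one_ne_zero, mem_closedBall, dist_zero_right]
    simp [hz₁.le]
  haveI : l.NeBot := mem_closure_iff_nhdsWithin_neBot.mp hmem
  -- deriv w tends to M := L / (I * z₁)
  set M : ℂ := L / (I * z₁) with hM
  have htendzId : Filter.Tendsto (fun z : ℂ => I * z) l (nhds (I * z₁)) := by
    exact (Filter.Tendsto.const_mul I (continuous_id.tendsto z₁)).mono_left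
      nhdsWithin_le_nhds
  have hderiv : Filter.Tendsto (deriv w) l (nhds M) := by
    have h1 : Filter.Tendsto (fun z => (I * z * deriv w z) / (I * z)) l (nhds M) :=
      hL.div htendzId hIz₁
    refine h1.congr' ?_
    have hne : {z : ℂ | z ≠ 0} ∈ nhds z₁ := isOpen_ne.mem_nhds hz₁0
    filter_upwards [nhdsWithin_le_nhds hne] with z hz
    field_simp
  -- w is Cauchy along l, hence has a limit
  rw [← cauchy_map_iff_exists_tendsto] at hhard ⊢
  rw [Metric.cauchy_iff]
  refine ⟨Filter.map_neBot, fun ε hε => ?_⟩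
  -- bound ‖deriv w‖ by ‖M‖ + 1 near z₁
  have hC : (0:ℝ) < ‖M‖ + 1 := by positivity
  obtain ⟨δ, hδpos, hδ⟩ := Metric.tendsto_nhdsWithin_nhds.mp hderiv 1 one_pos
  set δ' : ℝ := min δ (ε / (2 * (‖M‖ + 1))) with hδ'
  have hδ'pos : 0 < δ' := lt_min hδpos (by positivity)
  set s : Set ℂ := ball z₁ δ' ∩ ball (0 : ℂ) 1 with hs
  refine ⟨w '' s, ?_, ?_⟩
  · rw [Filter.mem_map]
    have : s ∈ l := by
      rw [hs, Set.inter_comm]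
      exact inter_mem_nhdsWithin _ (ball_mem_nhds _ hδ'pos)
    exact Filter.mem_of_superset this (fun x hx => Set.mem_image_of_mem w hx)
  · rintro _ ⟨x, hx, rfl⟩ _ ⟨y, hy, rfl⟩
    have hconv : Convex ℝ s := (convex_ball _ _).inter (convex_ball _ _)
    have hbound : ∀ z ∈ s, ‖deriv w z‖ ≤ ‖M‖ + 1 := by
      rintro z ⟨hz1, hz2⟩
      have := hδ hz2 (lt_of_lt_of_le (mem_ball.mp hz1) (min_le_left _ _))
      calc ‖deriv w z‖ = ‖M + (deriv w z - M)‖ := by ring_nf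
        _ ≤ ‖M‖ + ‖deriv w z - M‖ := norm_add_le _ _
        _ ≤ ‖M‖ + 1 := by
            have : dist (deriv w z) M < 1 := this
            rw [dist_eq_norm] at this
            linarith
    have hdiff : ∀ z ∈ s, DifferentiableAt ℂ w z := by
      rintro z ⟨_, hz2⟩
      exact (hw.differentiableAt (isOpen_ball.mem_nhds hz2))
    have hkey : ‖w y - w x‖ ≤ (‖M‖ + 1) * ‖y - x‖ :=
      hconv.norm_image_sub_le_of_norm_deriv_le hdiff hbound hx hy
    have hxy : ‖y - x‖ < 2 * δ' := by
      calc ‖y - x‖ = dist y x := (dist_eq_norm _ _).symm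
        _ ≤ dist y z₁ + dist z₁ x := dist_triangle _ _ _
        _ < δ' + δ' := add_lt_add (mem_ball.mp hy.1) (by
            rw [dist_comm]; exact mem_ball.mp hx.1)
        _ = 2 * δ' := by ring
    rw [dist_eq_norm]
    calc ‖w x - w y‖ = ‖w y - w x‖ := norm_sub_rev _ _
      _ ≤ (‖M‖ + 1) * ‖y - x‖ := hkey
      _ < (‖M‖ + 1) * (2 * δ') := by
          exact mul_lt_mul_of_pos_left hxy hC
      _ ≤ (‖M‖ + 1) * (2 * (ε / (2 * (‖M‖ + 1)))) := by
          have : δ' ≤ ε / (2 * (‖M‖ + 1)) := min_le_right _ _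
          nlinarith
      _ = ε := by field_simp
end
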